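/- For every z ∈ ℂ∖[−1,1]: (1/π) ∫_{−1}^{1} log|t−z| · (T_2(t) − 1)/√(1−t²) dt = log|J₊⁻¹(z)| + log 2 − Re( (J₊⁻¹(z))² )/2, and for every integer k ≥ 3, (1/π) ∫_{−1}^{1} log|t−z| · (T_k(t) − T_{k−2}(t))/√(1−t²) dt = Re( (J₊⁻¹(z))^{k−2}/(k−2) − (J₊⁻¹(z))^{k}/k ). -/

import Mathlib

open MeasureTheory Filter Set Polynomial

noncomputable def Jinv (z : ℂ) : ℂ :=
  z - (z - 1) ^ ((1 : ℂ) / 2) * (z + 1) ^ ((1 : ℂ) / 2)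

section Basic
variable {z : ℂ} (hz : z ∉ Complex.ofReal '' Set.Icc (-1 : ℝ) 1)

lemma hz' (hz : z ∉ Complex.ofReal '' Set.Icc (-1 : ℝ) 1) :
    ¬ (z.im = 0 ∧ -1 ≤ z.re ∧ z.re ≤ 1) := by
  rintro ⟨h0, h1, h2⟩
  exact hz ⟨z.re, ⟨h1, h2⟩, by simp [Complex.ext_iff, h0.symm]⟩

lemma hz1 (hz : z ∉ Complex.ofReal '' Set.Icc (-1 : ℝ) 1) : z - 1 ≠ 0 := by
  intro h
  rw [sub_eq_zero] at h
  exact hz' hz (by simp [h])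

lemma hzm1 (hz : z ∉ Complex.ofReal '' Set.Icc (-1 : ℝ) 1) : z + 1 ≠ 0 := by
  intro h
  rw [add_eq_zero_iff_eq_neg] at h
  exact hz' hz (by simp [h])

lemma sq_s (hz : z ∉ Complex.ofReal '' Set.Icc (-1 : ℝ) 1) :
    ((z - 1) ^ ((1 : ℂ) / 2) * (z + 1) ^ ((1 : ℂ) / 2)) ^ 2 = z ^ 2 - 1 := by
  have e1 : ((z-1) ^ ((1:ℂ)/2)) ^ 2 = z - 1 := by
    rw [sq, ← Complex.cpow_add _ _ (hz1 hz)]; norm_num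
  have e2 : ((z+1) ^ ((1:ℂ)/2)) ^ 2 = z + 1 := by
    rw [sq, ← Complex.cpow_add _ _ (hzm1 hz)]; norm_num
  rw [mul_pow, e1, e2]; ring

lemma w_mul (hz : z ∉ Complex.ofReal '' Set.Icc (-1 : ℝ) 1) :
    Jinv z * (2 * z - Jinv z) = 1 := by
  have := sq_s hz
  unfold Jinv
  linear_combination (z^2 : ℂ) - 1 - this

lemma w_ne (hz : z ∉ Complex.ofReal '' Set.Icc (-1 : ℝ) 1) : Jinv z ≠ 0 := by
  intro h
  have := w_mul hz
  rw [h, zero_mul] at this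
  exact one_ne_zero this.symm

/-- real/imag of the principal half-power. -/
lemma half_pow_re_im {x : ℂ} (hx : x ≠ 0) :
    (x ^ ((1:ℂ)/2)).re = Real.exp ((Complex.log x).re / 2) * Real.cos (Complex.arg x / 2) ∧
    (x ^ ((1:ℂ)/2)).im = Real.exp ((Complex.log x).re / 2) * Real.sin (Complex.arg x / 2) := by
  rw [Complex.cpow_def_of_ne_zero hx, Complex.exp_re, Complex.exp_im]
  have h1 : (Complex.log x * (1/2)).re = (Complex.log x).re / 2 := by
    simp [Complex.mul_re]; ring
  have h2 : (Complex.log x * (1/2)).im = Complex.arg x / 2 := by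
    simp [Complex.mul_im, Complex.log_im]; ring
  rw [h1, h2]; exact ⟨rfl, rfl⟩

lemma arg_diff_lt (hz : z ∉ Complex.ofReal '' Set.Icc (-1 : ℝ) 1) :
    |Complex.arg (z - 1) - Complex.arg (z + 1)| < Real.pi ∨
      (Complex.arg (z - 1) = Complex.arg (z + 1)) := by
  rcases lt_trichotomy z.im 0 with him | him | him
  · left
    have i1 : (z - 1).im < 0 := by simpa using him
    have i2 : (z + 1).im < 0 := by simpa using him
    have a1 := Complex.arg_neg_iff.mpr i1
    have a2 := Complex.arg_neg_iff.mpr i2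
    have b1 := Complex.neg_pi_lt_arg (z - 1)
    have b2 := Complex.neg_pi_lt_arg (z + 1)
    rw [abs_lt]; constructor <;> linarith
  · -- real case
    rcases lt_trichotomy z.re 1 with hre | hre | hre
    · -- must have re < -1
      have hre' : z.re < -1 := by
        rcases lt_trichotomy z.re (-1) with h | h | h
        · exact h
        · exact absurd ⟨him, by linarith, by linarith⟩ (hz' hz)
        · exact absurd ⟨him, by linarith, by linarith⟩ (hz' hz)
      right
      have a1 : Complex.arg (z - 1) = Real.pi :=
        Complex.arg_eq_pi_iff.mpr ⟨by simp; linarith, by simp [him]⟩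
      have a2 : Complex.arg (z + 1) = Real.pi :=
        Complex.arg_eq_pi_iff.mpr ⟨by simp; linarith, by simp [him]⟩
      rw [a1, a2]
    · exact absurd (hz' hz) (by simp [him, hre])
    · right
      have a1 : Complex.arg (z - 1) = 0 :=
        Complex.arg_eq_zero_iff.mpr ⟨by simp; linarith, by simp [him]⟩
      have a2 : Complex.arg (z + 1) = 0 :=
        Complex.arg_eq_zero_iff.mpr ⟨by simp; linarith, by simp [him]⟩
      rw [a1, a2]
  · left
    have i1 : 0 < (z - 1).im := by simpa using him
    have i2 : 0 < (z + 1).im := by simpa using him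
    have a1 : 0 < Complex.arg (z - 1) := by
      rcases (Complex.arg_nonneg_iff.mpr i1.le).lt_or_eq with h | h
      · exact h
      · exact absurd (Complex.arg_eq_zero_iff.mp h.symm).2 i1.ne'
    have a2 : 0 < Complex.arg (z + 1) := by
      rcases (Complex.arg_nonneg_iff.mpr i2.le).lt_or_eq with h | h
      · exact h
      · exact absurd (Complex.arg_eq_zero_iff.mp h.symm).2 i2.ne'
    have b1 : Complex.arg (z - 1) < Real.pi := Complex.arg_lt_pi_iff.mpr (Or.inr i1.ne')
    have b2 : Complex.arg (z + 1) < Real.pi := Complex.arg_lt_pi_iff.mpr (Or.inr i2.ne')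
    rw [abs_lt]; constructor <;> linarith

lemma re_conj_ab_pos (hz : z ∉ Complex.ofReal '' Set.Icc (-1 : ℝ) 1) :
    0 < ((starRingEnd ℂ) ((z - 1) ^ ((1:ℂ)/2)) * (z + 1) ^ ((1:ℂ)/2)).re := by
  set a := (z - 1) ^ ((1:ℂ)/2)
  set b := (z + 1) ^ ((1:ℂ)/2)
  obtain ⟨ra, ia⟩ := half_pow_re_im (hz1 hz)
  obtain ⟨rb, ib⟩ := half_pow_re_im (hzm1 hz)
  have hre : ((starRingEnd ℂ) a * b).re = a.re * b.re + a.im * b.im := by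
    simp [Complex.mul_re]
  rw [hre, ra, ia, rb, ib]
  have key : a.re * b.re + a.im * b.im =
      Real.exp ((Complex.log (z-1)).re / 2) * Real.exp ((Complex.log (z+1)).re / 2) *
        Real.cos (Complex.arg (z-1) / 2 - Complex.arg (z+1) / 2) := by
    rw [Real.cos_sub, ra, ia, rb, ib]; ring
  rw [ra, ia, rb, ib] at key
  rw [key]
  apply mul_pos (mul_pos (Real.exp_pos _) (Real.exp_pos _))
  apply Real.cos_pos_of_mem_Ioo
  have hp := Real.pi_pos
  rcases arg_diff_lt hz with h | h
  · rw [abs_lt] at h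
    constructor
    · linarith [h.1]
    · linarith [h.2]
  · rw [h]
    have h0 : Complex.arg (z+1) / 2 - Complex.arg (z+1) / 2 = 0 := by ring
    rw [h0]
    constructor
    · linarith
    · linarith

lemma re_conj_z_s_pos (hz : z ∉ Complex.ofReal '' Set.Icc (-1 : ℝ) 1) :
    0 < ((starRingEnd ℂ) z * ((z - 1) ^ ((1:ℂ)/2) * (z + 1) ^ ((1:ℂ)/2))).re := by
  set a := (z - 1) ^ ((1:ℂ)/2) with ha
  set b := (z + 1) ^ ((1:ℂ)/2) with hb
  have ha2 : a ^ 2 = z - 1 := by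
    rw [ha, sq, ← Complex.cpow_add _ _ (hz1 hz)]; norm_num
  have hb2 : b ^ 2 = z + 1 := by
    rw [hb, sq, ← Complex.cpow_add _ _ (hzm1 hz)]; norm_num
  have h2z : a ^ 2 + b ^ 2 = 2 * z := by rw [ha2, hb2]; ring
  have hcz : (starRingEnd ℂ) a ^ 2 + (starRingEnd ℂ) b ^ 2 = 2 * (starRingEnd ℂ) z := by
    have h := congrArg (starRingEnd ℂ) h2z
    rw [map_add, map_pow, map_pow, map_mul, map_ofNat] at h
    exact h
  have key : 2 * ((starRingEnd ℂ) z * (a * b)) =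
      (Complex.normSq a : ℂ) * ((starRingEnd ℂ) a * b)
        + (Complex.normSq b : ℂ) * ((starRingEnd ℂ) ((starRingEnd ℂ) a * b)) := by
    rw [map_mul, Complex.conj_conj, ← Complex.mul_conj, ← Complex.mul_conj]
    linear_combination -a * b * hcz
  have hre : 2 * ((starRingEnd ℂ) z * (a * b)).re
      = (Complex.normSq a + Complex.normSq b) * ((starRingEnd ℂ) a * b).re := by
    have := congrArg Complex.re key
    rw [Complex.add_re, Complex.re_ofReal_mul, Complex.re_ofReal_mul, Complex.conj_re] at this
    rw [show (2 * ((starRingEnd ℂ) z * (a * b))).re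
        = 2 * ((starRingEnd ℂ) z * (a * b)).re by simp] at this
    rw [this]; ring
  have hna : 0 < Complex.normSq a := by
    rw [Complex.normSq_pos]
    intro h0
    rw [h0] at ha2
    simp at ha2
    exact hz1 hz (by rw [sub_eq_zero]; linear_combination -ha2)
  have hnb : 0 < Complex.normSq b := by
    rw [Complex.normSq_pos]
    intro h0
    rw [h0] at hb2
    simp at hb2
    exact hzm1 hz (by linear_combination -hb2)
  have hu := re_conj_ab_pos hz
  nlinarith [hu, hna, hnb, hre]

lemma abs_w_lt_one (hz : z ∉ Complex.ofReal '' Set.Icc (-1 : ℝ) 1) :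
    ‖Jinv z‖ < 1 := by
  set s := (z - 1) ^ ((1:ℂ)/2) * (z + 1) ^ ((1:ℂ)/2) with hs
  have hw : Jinv z = z - s := rfl
  have h2 : 2 * z - Jinv z = z + s := by rw [hw]; ring
  have hprod : ‖Jinv z‖ * ‖z + s‖ = 1 := by
    rw [← norm_mul, ← h2, w_mul hz, norm_one]
  have hres : 0 < (z * (starRingEnd ℂ) s).re := by
    have := re_conj_z_s_pos hz
    have hc : (z * (starRingEnd ℂ) s).re = ((starRingEnd ℂ) z * s).re := by
      rw [← Complex.conj_re (z * (starRingEnd ℂ) s), map_mul, Complex.conj_conj]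
    rw [hc]; exact this
  have hlt : Complex.normSq (z - s) < Complex.normSq (z + s) := by
    rw [Complex.normSq_sub, Complex.normSq_add]
    nlinarith [hres]
  have habs : ‖Jinv z‖ < ‖z + s‖ := by
    have h1 : ‖Jinv z‖ ^ 2 < ‖z + s‖ ^ 2 := by
      rw [hw, Complex.sq_norm, Complex.sq_norm]; exact hlt
    nlinarith [norm_nonneg (Jinv z), norm_nonneg (z + s)]
  nlinarith [norm_nonneg (Jinv z), hprod, habs]

lemma key_factor (hz : z ∉ Complex.ofReal '' Set.Icc (-1 : ℝ) 1) (θ : ℝ) :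
    ((Real.cos θ : ℂ) - z) * (2 * Jinv z) =
      -((1 - Jinv z * Complex.exp (θ * Complex.I)) *
        (1 - Jinv z * Complex.exp (-(θ * Complex.I)))) := by
  have h1 : Complex.exp (θ * Complex.I) * Complex.exp (-(θ * Complex.I)) = 1 := by
    rw [← Complex.exp_add]; simp
  have h2 : Complex.exp (θ * Complex.I) + Complex.exp (-(θ * Complex.I))
      = 2 * (Real.cos θ : ℂ) := by
    rw [show -(↑θ * Complex.I) = (-θ : ℝ) * Complex.I by push_cast; ring]
    rw [Complex.exp_mul_I, Complex.exp_mul_I]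
    push_cast
    simp [Complex.cos_neg, Complex.sin_neg]
    ring
  have hw := w_mul hz
  linear_combination (-(w_mul hz)) - Jinv z * h2 + (Jinv z)^2 * h1

lemma one_sub_ne (hz : z ∉ Complex.ofReal '' Set.Icc (-1 : ℝ) 1) (u : ℂ)
    (hu : ‖u‖ = 1) : 1 - Jinv z * u ≠ 0 := by
  intro h
  have : ‖Jinv z * u‖ = 1 := by
    rw [show Jinv z * u = 1 by linear_combination -h]; simp
  rw [norm_mul, hu, mul_one] at this
  exact absurd this (abs_w_lt_one hz).ne

lemma abs_exp_I (θ : ℝ) : ‖Complex.exp (θ * Complex.I)‖ = 1 := by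
  rw [Complex.norm_exp]
  simp [Complex.mul_re]

lemma cos_ne_z (hz : z ∉ Complex.ofReal '' Set.Icc (-1 : ℝ) 1) (θ : ℝ) :
    (Real.cos θ : ℂ) - z ≠ 0 := by
  intro h
  rw [sub_eq_zero] at h
  exact hz ⟨Real.cos θ, ⟨Real.neg_one_le_cos θ, Real.cos_le_one θ⟩, h⟩

lemma abs_factor (hz : z ∉ Complex.ofReal '' Set.Icc (-1 : ℝ) 1) (θ : ℝ) :
    Real.log (‖(Real.cos θ : ℂ) - z‖) =
      Real.log (‖1 - Jinv z * Complex.exp (θ * Complex.I)‖)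
      + Real.log (‖1 - Jinv z * Complex.exp (-(θ * Complex.I))‖)
      - Real.log (2 * ‖Jinv z‖) := by
  have h := congrArg (‖·‖) (key_factor hz θ)
  rw [norm_mul, norm_neg, norm_mul, norm_mul] at h
  rw [Complex.norm_two] at h
  have e1 : 1 - Jinv z * Complex.exp (θ * Complex.I) ≠ 0 :=
    one_sub_ne hz _ (abs_exp_I θ)
  have e2 : 1 - Jinv z * Complex.exp (-(θ * Complex.I)) ≠ 0 := by
    apply one_sub_ne hz
    rw [show -(↑θ * Complex.I) = (-θ : ℝ) * Complex.I by push_cast; ring]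
    exact abs_exp_I (-θ)
  have hane : ‖(Real.cos θ : ℂ) - z‖ ≠ 0 :=
    norm_ne_zero_iff.mpr (cos_ne_z hz θ)
  have hw0 : (0:ℝ) < ‖Jinv z‖ := norm_pos_iff.mpr (w_ne hz)
  have hlog := congrArg Real.log h
  rw [Real.log_mul hane (by positivity), Real.log_mul two_ne_zero hw0.ne',
    Real.log_mul (norm_ne_zero_iff.mpr e1) (norm_ne_zero_iff.mpr e2)] at hlog
  rw [Real.log_mul two_ne_zero hw0.ne']
  linarith

lemma exp_add_exp_neg (x : ℝ) :
    Complex.exp (x * Complex.I) + Complex.exp (-(x * Complex.I))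
      = 2 * (Real.cos x : ℂ) := by
  rw [show -(↑x * Complex.I) = (-x : ℝ) * Complex.I by push_cast; ring]
  rw [Complex.exp_mul_I, Complex.exp_mul_I]
  push_cast
  simp [Complex.cos_neg, Complex.sin_neg]
  ring

lemma hasSum_phi (hz : z ∉ Complex.ofReal '' Set.Icc (-1 : ℝ) 1) (θ : ℝ) :
    HasSum (fun n : ℕ => 2 * Real.cos (n * θ) / n * ((Jinv z) ^ n).re)
      (- Real.log (‖(Real.cos θ : ℂ) - z‖)
        - Real.log (2 * ‖Jinv z‖)) := by
  set w := Jinv z with hwdef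
  have habs1 : ‖w * Complex.exp (θ * Complex.I)‖ < 1 := by
    rw [norm_mul, abs_exp_I, mul_one]
    exact abs_w_lt_one hz
  have habs2 : ‖w * Complex.exp (-(θ * Complex.I))‖ < 1 := by
    rw [norm_mul]
    rw [show -(↑θ * Complex.I) = (-θ : ℝ) * Complex.I by push_cast; ring, abs_exp_I, mul_one]
    exact abs_w_lt_one hz
  have h1 := Complex.hasSum_taylorSeries_neg_log habs1
  have h2 := Complex.hasSum_taylorSeries_neg_log habs2
  have hadd := h1.add h2
  have hre := (Complex.hasSum_iff _ _).mp hadd |>.1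
  convert hre using 1
  · funext n
    have e1 : (w * Complex.exp (θ * Complex.I)) ^ n
        = w ^ n * Complex.exp ((n * θ : ℝ) * Complex.I) := by
      rw [mul_pow, ← Complex.exp_nat_mul]
      congr 2
      push_cast; ring
    have e2 : (w * Complex.exp (-(θ * Complex.I))) ^ n
        = w ^ n * Complex.exp (-((n * θ : ℝ) * Complex.I)) := by
      rw [mul_pow, ← Complex.exp_nat_mul]
      congr 2
      push_cast; ring
    have comb : (w * Complex.exp (θ * Complex.I)) ^ n / n
        + (w * Complex.exp (-(θ * Complex.I))) ^ n / n
        = ((2 * Real.cos (n * θ) : ℝ) : ℂ) * w ^ n / n := by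
      rw [e1, e2, ← add_div]
      congr 1
      rw [← mul_add, exp_add_exp_neg (n * θ)]
      push_cast
      ring
    rw [comb, Complex.div_natCast_re, Complex.re_ofReal_mul]
    ring
  · rw [Complex.add_re, Complex.neg_re, Complex.neg_re, Complex.log_re, Complex.log_re]
    have := abs_factor hz θ
    linarith

lemma int_cos_int (m : ℤ) :
    ∫ θ in (0:ℝ)..Real.pi, Real.cos (m * θ) = if m = 0 then Real.pi else 0 := by
  rcases eq_or_ne m 0 with h | h
  · simp [h]
  · rw [if_neg h]
    have hd : ∀ x ∈ Set.uIcc (0:ℝ) Real.pi,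
        HasDerivAt (fun y : ℝ => Real.sin (m * y) / m) (Real.cos (m * x)) x := by
      intro x _
      have h1 : HasDerivAt (fun y : ℝ => (m:ℝ) * y) (m:ℝ) x := by
        simpa using (hasDerivAt_id x).const_mul (m:ℝ)
      have h2 := (Real.hasDerivAt_sin ((m:ℝ) * x)).comp x h1
      have h3 := h2.div_const (m:ℝ)
      have hm : (m:ℝ) ≠ 0 := Int.cast_ne_zero.mpr h
      have e : Real.cos (m * x) * m / m = Real.cos (m * x) := by field_simp
      rw [e] at h3
      exact h3
    have hint : IntervalIntegrable (fun x : ℝ => Real.cos (m * x)) volume 0 Real.pi :=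
      (Real.continuous_cos.comp (continuous_const.mul continuous_id)).intervalIntegrable _ _
    rw [intervalIntegral.integral_eq_sub_of_hasDerivAt hd hint]
    simp [Real.sin_int_mul_pi]

lemma int_cos_cos (m N : ℕ) :
    ∫ θ in (0:ℝ)..Real.pi, Real.cos (m * θ) * Real.cos (N * θ)
      = if m = 0 ∧ N = 0 then Real.pi else if m = N then Real.pi / 2 else 0 := by
  have key : ∀ θ : ℝ, Real.cos (m * θ) * Real.cos (N * θ)
      = (Real.cos ((((m:ℤ) - N) : ℤ) * θ) + Real.cos ((((m:ℤ) + N) : ℤ) * θ)) / 2 := by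
    intro θ
    have e1 : ((((m:ℤ) - N) : ℤ) : ℝ) * θ = m * θ - N * θ := by push_cast; ring
    have e2 : ((((m:ℤ) + N) : ℤ) : ℝ) * θ = m * θ + N * θ := by push_cast; ring
    rw [e1, e2, Real.cos_sub, Real.cos_add]
    ring
  simp_rw [key]
  have i1 : IntervalIntegrable (fun θ : ℝ => Real.cos ((((m:ℤ) - N) : ℤ) * θ)) volume 0 Real.pi :=
    (Real.continuous_cos.comp (continuous_const.mul continuous_id)).intervalIntegrable _ _
  have i2 : IntervalIntegrable (fun θ : ℝ => Real.cos ((((m:ℤ) + N) : ℤ) * θ)) volume 0 Real.pi :=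
    (Real.continuous_cos.comp (continuous_const.mul continuous_id)).intervalIntegrable _ _
  rw [intervalIntegral.integral_div, intervalIntegral.integral_add i1 i2,
    int_cos_int, int_cos_int]
  rcases Nat.eq_zero_or_pos m with hm | hm
  · rcases Nat.eq_zero_or_pos N with hN | hN
    · simp [hm, hN]
    · have : ¬ ((m:ℤ) - N = 0) := by omega
      have h2 : ¬ ((m:ℤ) + N = 0) := by omega
      have h3 : ¬ (m = 0 ∧ N = 0) := by omega
      have h4 : ¬ (m = N) := by omega
      simp only [if_neg this, if_neg h2, if_neg h3, if_neg h4]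
      norm_num
  · have h2 : ¬ ((m:ℤ) + N = 0) := by omega
    have h3 : ¬ (m = 0 ∧ N = 0) := by omega
    rcases eq_or_ne m N with he | he
    · have h5 : ((m:ℤ) - N = 0) := by omega
      simp only [if_pos h5, if_neg h2, if_neg h3, if_pos he]
      norm_num
    · have h5 : ¬((m:ℤ) - N = 0) := by omega
      simp only [if_neg h5, if_neg h2, if_neg h3, if_neg he]
      norm_num

lemma int_cos_nat (m : ℕ) :
    ∫ θ in (0:ℝ)..Real.pi, Real.cos (m * θ) = if m = 0 then Real.pi else 0 := by
  have h := int_cos_int (m : ℤ)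
  have e : ∀ θ:ℝ, Real.cos (((m:ℤ):ℝ) * θ) = Real.cos ((m:ℝ) * θ) := by
    intro θ; norm_num
  simp only [e] at h
  rw [h]
  simp

lemma phi_cont (hz : z ∉ Complex.ofReal '' Set.Icc (-1 : ℝ) 1) :
    Continuous (fun θ : ℝ => Real.log (‖(Real.cos θ : ℂ) - z‖)) := by
  have hc : Continuous (fun θ : ℝ => ‖(Real.cos θ : ℂ) - z‖) :=
    continuous_norm.comp
      ((Complex.continuous_ofReal.comp Real.continuous_cos).sub continuous_const)
  exact hc.log (fun θ => norm_ne_zero_iff.mpr (cos_ne_z hz θ))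

lemma A_int (hz : z ∉ Complex.ofReal '' Set.Icc (-1 : ℝ) 1) (N : ℕ) :
    ∫ θ in (0:ℝ)..Real.pi, Real.log (‖(Real.cos θ : ℂ) - z‖) * Real.cos (N * θ)
      = if N = 0 then -(Real.pi * Real.log (2 * ‖Jinv z‖))
        else -(Real.pi * ((Jinv z) ^ N).re / (N:ℝ)) := by
  have pi_pos := Real.pi_pos
  set w := Jinv z with hwdef
  have hr1 : ‖w‖ < 1 := abs_w_lt_one hz
  have hr0 : 0 ≤ ‖w‖ := norm_nonneg w
  set h : ℕ → ℝ → ℝ :=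
    fun n θ => (2 * Real.cos (n*θ) / n * ((w^n).re)) * Real.cos (N*θ) with hh
  have hsum : ∀ θ:ℝ, HasSum (fun n => h n θ)
      ((- Real.log (‖(Real.cos θ : ℂ) - z‖)
        - Real.log (2 * ‖w‖)) * Real.cos (N*θ)) :=
    fun θ => (hasSum_phi hz θ).mul_right _
  have hcont : ∀ n, Continuous (h n) := by
    intro n
    apply Continuous.mul
    · apply Continuous.mul
      · exact (continuous_const.mul
          (Real.continuous_cos.comp (continuous_const.mul continuous_id))).div_const _
      · exact continuous_const
    · exact Real.continuous_cos.comp (continuous_const.mul continuous_id)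
  have hbound : ∀ n θ, ‖h n θ‖ ≤ 2 * ‖w‖ ^ n := by
    intro n θ
    rcases n with _ | m
    · simp [hh]
    · have c3 : |((w^(m+1)).re)| ≤ ‖w‖ ^ (m+1) := by
        calc |((w^(m+1)).re)| ≤ ‖w^(m+1)‖ := Complex.abs_re_le_norm _
        _ = ‖w‖ ^ (m+1) := by rw [norm_pow]
      have hn1 : (1:ℝ) ≤ ((m+1 : ℕ):ℝ) := by exact_mod_cast Nat.one_le_iff_ne_zero.mpr (Nat.succ_ne_zero m)
      have d1 : |2 * Real.cos (((m+1:ℕ):ℝ)*θ) / ((m+1:ℕ):ℝ)| ≤ 2 := by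
        rw [abs_div]
        have : |2 * Real.cos (((m+1:ℕ):ℝ)*θ)| ≤ 2 := by
          rw [abs_mul]
          have := Real.abs_cos_le_one (((m+1:ℕ):ℝ)*θ)
          rw [abs_two]
          nlinarith
        calc |2 * Real.cos (((m+1:ℕ):ℝ)*θ)| / |((m+1:ℕ):ℝ)|
            ≤ |2 * Real.cos (((m+1:ℕ):ℝ)*θ)| := by
              apply div_le_self (abs_nonneg _)
              rw [abs_of_nonneg (by positivity : (0:ℝ) ≤ ((m+1:ℕ):ℝ))]
              exact hn1
          _ ≤ 2 := this
      have c2 : |Real.cos (N*θ)| ≤ 1 := Real.abs_cos_le_one _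
      calc ‖h (m+1) θ‖
          = |2 * Real.cos (((m+1:ℕ):ℝ)*θ) / ((m+1:ℕ):ℝ)| * |((w^(m+1)).re)| * |Real.cos (N*θ)| := by
            rw [hh]; rw [Real.norm_eq_abs, abs_mul, abs_mul]
        _ ≤ 2 * (‖w‖ ^ (m+1)) * 1 := by
            apply mul_le_mul _ c2 (abs_nonneg _) (by positivity)
            exact mul_le_mul d1 c3 (abs_nonneg _) (by norm_num)
        _ = 2 * ‖w‖ ^ (m+1) := by ring
  have hIc : ∀ n, MeasureTheory.IntegrableOn (h n) (Set.Ioc 0 Real.pi) := by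
    intro n
    exact (hcont n).integrableOn_Ioc
  have hnormint : ∀ n, (∫ θ in Set.Ioc (0:ℝ) Real.pi, ‖h n θ‖) ≤ Real.pi * (2 * ‖w‖ ^ n) := by
    intro n
    have h1 : (∫ θ in Set.Ioc (0:ℝ) Real.pi, ‖h n θ‖)
        ≤ ∫ _ in Set.Ioc (0:ℝ) Real.pi, (2 * ‖w‖ ^ n) := by
      apply MeasureTheory.integral_mono ((hcont n).norm.integrableOn_Ioc)
        (MeasureTheory.integrableOn_const (by rw [Real.volume_Ioc]; exact ENNReal.ofReal_ne_top))
      exact fun θ => hbound n θ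
    rw [MeasureTheory.setIntegral_const] at h1
    rw [Real.volume_real_Ioc_of_le (by linarith)] at h1
    simpa using h1
  have hsummable : Summable (fun n => ∫ θ in Set.Ioc (0:ℝ) Real.pi, ‖h n θ‖) := by
    apply Summable.of_nonneg_of_le
      (fun n => MeasureTheory.integral_nonneg (fun θ => norm_nonneg _)) hnormint
    have := (summable_geometric_of_lt_one hr0 hr1).mul_left (Real.pi * 2)
    refine this.congr (fun n => ?_)
    ring
  have hswap := MeasureTheory.integral_tsum_of_summable_integral_norm
    (μ := MeasureTheory.volume.restrict (Set.Ioc (0:ℝ) Real.pi)) (fun n => hIc n) hsummable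
  -- identify the tsum integrand
  have htsum_eq : ∀ θ:ℝ, (∑' n, h n θ)
      = (- Real.log (‖(Real.cos θ : ℂ) - z‖)
        - Real.log (2 * ‖w‖)) * Real.cos (N*θ) := fun θ => (hsum θ).tsum_eq
  rw [MeasureTheory.integral_congr_ae (Filter.Eventually.of_forall (fun θ => htsum_eq θ))] at hswap
  -- compute each ∫ h n
  have hJ : ∀ n:ℕ, (∫ θ in Set.Ioc (0:ℝ) Real.pi, h n θ)
      = (2 * ((w^n).re) / n) *
        (if n = 0 ∧ N = 0 then Real.pi else if n = N then Real.pi / 2 else 0) := by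
    intro n
    rw [← intervalIntegral.integral_of_le (by linarith : (0:ℝ) ≤ Real.pi)]
    have e : ∀ θ:ℝ, h n θ = (2 * ((w^n).re) / n) * (Real.cos (n*θ) * Real.cos (N*θ)) := by
      intro θ; rw [hh]; ring
    rw [intervalIntegral.integral_congr (fun θ _ => e θ)]
    rw [intervalIntegral.integral_const_mul, int_cos_cos]
  have hle : (0:ℝ) ≤ Real.pi := le_of_lt pi_pos
  have heq2 : ∑' (n:ℕ), (∫ θ in Set.Ioc (0:ℝ) Real.pi, h n θ)
      = ∫ θ in (0:ℝ)..Real.pi,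
          (-Real.log (‖(Real.cos θ:ℂ) - z‖)
            - Real.log (2*‖w‖)) * Real.cos (N*θ) := by
    rw [hswap, intervalIntegral.integral_of_le hle]
  have hint1 : IntervalIntegrable
      (fun θ:ℝ => Real.log (‖(Real.cos θ:ℂ) - z‖) * Real.cos (N*θ))
      MeasureTheory.volume 0 Real.pi :=
    ((phi_cont hz).mul
      (Real.continuous_cos.comp (continuous_const.mul continuous_id))).intervalIntegrable _ _
  have hint2 : IntervalIntegrable
      (fun θ:ℝ => Real.log (2*‖w‖) * Real.cos (N*θ))
      MeasureTheory.volume 0 Real.pi :=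
    (continuous_const.mul
      (Real.continuous_cos.comp (continuous_const.mul continuous_id))).intervalIntegrable _ _
  have hsplit : ∫ θ in (0:ℝ)..Real.pi,
        (-Real.log (‖(Real.cos θ:ℂ) - z‖)
          - Real.log (2*‖w‖)) * Real.cos (N*θ)
      = -(∫ θ in (0:ℝ)..Real.pi,
            Real.log (‖(Real.cos θ:ℂ) - z‖) * Real.cos (N*θ))
        - Real.log (2*‖w‖) * ∫ θ in (0:ℝ)..Real.pi, Real.cos (N*θ) := by
    have e : ∀ θ:ℝ, (-Real.log (‖(Real.cos θ:ℂ) - z‖)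
          - Real.log (2*‖w‖)) * Real.cos (N*θ)
        = -(Real.log (‖(Real.cos θ:ℂ) - z‖) * Real.cos (N*θ)
          + Real.log (2*‖w‖) * Real.cos (N*θ)) := fun θ => by ring
    rw [intervalIntegral.integral_congr (fun θ _ => e θ),
      intervalIntegral.integral_neg, intervalIntegral.integral_add hint1 hint2,
      intervalIntegral.integral_const_mul]
    ring
  rcases Nat.eq_zero_or_pos N with hN | hN
  · subst hN
    have hJ0 : ∀ n:ℕ, (∫ θ in Set.Ioc (0:ℝ) Real.pi, h n θ) = 0 := by
      intro n
      rw [hJ n]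
      rcases eq_or_ne n 0 with hn | hn
      · subst hn; norm_num
      · simp [hn]
    have htsum0 : ∑' (n:ℕ), (∫ θ in Set.Ioc (0:ℝ) Real.pi, h n θ) = 0 := by
      simp [hJ0]
    rw [htsum0] at heq2
    rw [hsplit, int_cos_nat 0, if_pos rfl] at heq2
    rw [if_pos rfl]
    linarith
  · have hNne : N ≠ 0 := Nat.pos_iff_ne_zero.mp hN
    have htsum : ∑' (n:ℕ), (∫ θ in Set.Ioc (0:ℝ) Real.pi, h n θ)
        = Real.pi * ((w^N).re) / N := by
      rw [tsum_eq_single N (fun b hb => ?_)]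
      · rw [hJ N, if_neg (by tauto), if_pos rfl]
        field_simp
      · rw [hJ b, if_neg (by tauto), if_neg hb, mul_zero]
    rw [htsum] at heq2
    rw [hsplit, int_cos_nat N, if_neg hNne, mul_zero] at heq2
    rw [if_neg hNne]
    linarith

lemma cos_image_Ioo : Real.cos '' Set.Ioo 0 Real.pi = Set.Ioo (-1 : ℝ) 1 := by
  have pi_pos := Real.pi_pos
  apply Set.Subset.antisymm
  · rintro t ⟨θ, hθ, rfl⟩
    obtain ⟨h1, h2⟩ := hθ
    constructor
    · have := Real.strictAntiOn_cos ⟨h1.le, h2.le⟩ ⟨Real.pi_pos.le, le_refl _⟩ h2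
      rw [Real.cos_pi] at this
      linarith
    · have := Real.strictAntiOn_cos ⟨le_refl _, pi_pos.le⟩ ⟨h1.le, h2.le⟩ h1
      rw [Real.cos_zero] at this
      linarith
  · rintro t ⟨h1, h2⟩
    refine ⟨Real.arccos t, ⟨Real.arccos_pos.mpr h2, ?_⟩, Real.cos_arccos h1.le h2.le⟩
    rcases (Real.arccos_le_pi t).lt_or_eq with h | h
    · exact h
    · exfalso
      have hc := Real.cos_arccos h1.le h2.le
      rw [h, Real.cos_pi] at hc
      linarith

lemma transform_general (hz : z ∉ Complex.ofReal '' Set.Icc (-1 : ℝ) 1)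
    (G : ℝ → ℝ) (g : ℝ → ℝ)
    (hG : ∀ θ ∈ Set.Ioo (0:ℝ) Real.pi, G (Real.cos θ) = g θ) :
    ∫ t in (-1:ℝ)..1, Real.log (‖(t:ℂ) - z‖) * (G t / Real.sqrt (1 - t^2))
      = ∫ θ in (0:ℝ)..Real.pi,
          Real.log (‖(Real.cos θ:ℂ) - z‖) * g θ := by
  have pi_pos := Real.pi_pos
  set f : ℝ → ℝ := fun t => Real.log (‖(t:ℂ) - z‖) * (G t / Real.sqrt (1 - t^2))
    with hf
  have hchg : ∫ t in Set.Ioo (-1:ℝ) 1, f t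
      = ∫ θ in Set.Ioo (0:ℝ) Real.pi, |(-Real.sin θ)| • f (Real.cos θ) := by
    rw [← cos_image_Ioo]
    exact MeasureTheory.integral_image_eq_integral_abs_deriv_smul measurableSet_Ioo
      (fun θ _ => (Real.hasDerivAt_cos θ).hasDerivWithinAt)
      (Real.injOn_cos.mono Set.Ioo_subset_Icc_self) f
  have hpt : ∀ θ ∈ Set.Ioo (0:ℝ) Real.pi,
      |(-Real.sin θ)| • f (Real.cos θ)
        = Real.log (‖(Real.cos θ:ℂ) - z‖) * g θ := by
    intro θ hθ
    have hs : 0 < Real.sin θ := Real.sin_pos_of_pos_of_lt_pi hθ.1 hθ.2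
    have hsin : Real.sqrt (1 - Real.cos θ ^ 2) = Real.sin θ := by
      rw [show (1:ℝ) - Real.cos θ ^ 2 = Real.sin θ ^ 2 by
        have := Real.sin_sq_add_cos_sq θ; linarith]
      exact Real.sqrt_sq hs.le
    rw [abs_neg, abs_of_pos hs, hf]
    simp only [smul_eq_mul]
    rw [hsin, hG θ hθ]
    field_simp
  rw [intervalIntegral.integral_of_le (by norm_num : (-1:ℝ) ≤ 1),
    MeasureTheory.integral_Ioc_eq_integral_Ioo, hchg,
    MeasureTheory.setIntegral_congr_fun measurableSet_Ioo hpt,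
    ← MeasureTheory.integral_Ioc_eq_integral_Ioo,
    ← intervalIntegral.integral_of_le pi_pos.le]

lemma theta_split (hz : z ∉ Complex.ofReal '' Set.Icc (-1 : ℝ) 1) (a b : ℕ) :
    ∫ θ in (0:ℝ)..Real.pi, Real.log (‖(Real.cos θ:ℂ) - z‖)
        * (Real.cos (a*θ) - Real.cos (b*θ))
      = (if a = 0 then -(Real.pi * Real.log (2*‖Jinv z‖))
          else -(Real.pi * ((Jinv z)^a).re/(a:ℝ)))
        - (if b = 0 then -(Real.pi * Real.log (2*‖Jinv z‖))
          else -(Real.pi * ((Jinv z)^b).re/(b:ℝ))) := by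
  have hint : ∀ N:ℕ, IntervalIntegrable
      (fun θ:ℝ => Real.log (‖(Real.cos θ:ℂ) - z‖) * Real.cos (N*θ))
      MeasureTheory.volume 0 Real.pi := fun N =>
    ((phi_cont hz).mul
      (Real.continuous_cos.comp (continuous_const.mul continuous_id))).intervalIntegrable _ _
  have e : ∀ θ:ℝ, Real.log (‖(Real.cos θ:ℂ) - z‖)
        * (Real.cos (a*θ) - Real.cos (b*θ))
      = Real.log (‖(Real.cos θ:ℂ) - z‖) * Real.cos (a*θ)
        - Real.log (‖(Real.cos θ:ℂ) - z‖) * Real.cos (b*θ) := fun θ => by ring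
  rw [intervalIntegral.integral_congr (fun θ _ => e θ),
    intervalIntegral.integral_sub (hint a) (hint b), A_int hz a, A_int hz b]

end Basic

/-- Log transforms of modified weighted Chebyshev polynomials
`(T_k - T_{k-2})/√(1-t²)` for `z ∈ ℂ∖[-1,1]`. -/
theorem log_transform_modified_chebyshevT (z : ℂ)
    (hz : z ∉ Complex.ofReal '' Set.Icc (-1 : ℝ) 1) :
    ((1 / Real.pi) *
        ∫ t in (-1 : ℝ)..1,
          Real.log (‖(t : ℂ) - z‖)
            * (((Polynomial.Chebyshev.T ℝ 2).eval t - 1) / Real.sqrt (1 - t ^ 2)))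
      = Real.log (‖Jinv z‖) + Real.log 2 - ((Jinv z) ^ 2).re / 2 ∧
    ∀ k : ℕ, 3 ≤ k →
      ((1 / Real.pi) *
          ∫ t in (-1 : ℝ)..1,
            Real.log (‖(t : ℂ) - z‖)
              * (((Polynomial.Chebyshev.T ℝ k).eval t
                    - (Polynomial.Chebyshev.T ℝ ((k : ℤ) - 2)).eval t)
                  / Real.sqrt (1 - t ^ 2)))
        = ((Jinv z) ^ (k - 2) / ((k : ℂ) - 2) - (Jinv z) ^ k / k).re := by
  have hπ : Real.pi ≠ 0 := Real.pi_ne_zero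
  have hw0 : ‖Jinv z‖ ≠ 0 := norm_ne_zero_iff.mpr (w_ne hz)
  constructor
  · have hG : ∀ θ ∈ Set.Ioo (0:ℝ) Real.pi,
        ((Polynomial.Chebyshev.T ℝ 2).eval (Real.cos θ) - 1)
          = Real.cos (((2:ℕ):ℝ)*θ) - Real.cos (((0:ℕ):ℝ)*θ) := by
      intro θ _
      have h2 := Polynomial.Chebyshev.T_real_cos θ 2
      rw [h2]
      norm_num
    have h1 := transform_general hz
      (fun t => (Polynomial.Chebyshev.T ℝ 2).eval t - 1)
      (fun θ => Real.cos (((2:ℕ):ℝ)*θ) - Real.cos (((0:ℕ):ℝ)*θ)) hG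
    rw [show (fun t:ℝ => Real.log (‖(t:ℂ) - z‖)
      * (((Polynomial.Chebyshev.T ℝ 2).eval t - 1) / Real.sqrt (1 - t^2))) = fun t:ℝ => Real.log (‖(t:ℂ) - z‖)
      * (((Polynomial.Chebyshev.T ℝ 2).eval t - 1) / Real.sqrt (1 - t^2)) from rfl] at h1
    rw [h1, theta_split hz 2 0]
    rw [if_neg (by norm_num), if_pos rfl]
    rw [Real.log_mul two_ne_zero hw0]
    field_simp
    ring
  · intro k hk
    have hk0 : k ≠ 0 := by omega
    have hk2 : k - 2 ≠ 0 := by omega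
    have hcast : (((k:ℤ) - 2 : ℤ) : ℝ) = ((k - 2 : ℕ) : ℝ) := by
      push_cast [Nat.cast_sub (by omega : 2 ≤ k)]
      ring
    have hG : ∀ θ ∈ Set.Ioo (0:ℝ) Real.pi,
        ((Polynomial.Chebyshev.T ℝ k).eval (Real.cos θ)
            - (Polynomial.Chebyshev.T ℝ ((k:ℤ) - 2)).eval (Real.cos θ))
          = Real.cos ((k:ℝ)*θ) - Real.cos (((k - 2 : ℕ):ℝ)*θ) := by
      intro θ _
      have ha := Polynomial.Chebyshev.T_real_cos θ (k:ℤ)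
      have hb := Polynomial.Chebyshev.T_real_cos θ ((k:ℤ) - 2)
      rw [ha, hb, hcast]
      norm_num
    have h1 := transform_general hz
      (fun t => (Polynomial.Chebyshev.T ℝ k).eval t
        - (Polynomial.Chebyshev.T ℝ ((k:ℤ) - 2)).eval t)
      (fun θ => Real.cos ((k:ℝ)*θ) - Real.cos (((k - 2 : ℕ):ℝ)*θ)) hG
    rw [h1, theta_split hz k (k-2)]
    rw [if_neg hk0, if_neg hk2]
    have hden : ((k:ℂ) - 2) = ((k - 2 : ℕ) : ℂ) := by
      push_cast [Nat.cast_sub (by omega : 2 ≤ k)]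
      ring
    rw [hden, Complex.sub_re, Complex.div_natCast_re, Complex.div_natCast_re]
    have hkR : ((k:ℝ)) ≠ 0 := Nat.cast_ne_zero.mpr hk0
    have hk2R : (((k-2:ℕ)):ℝ) ≠ 0 := Nat.cast_ne_zero.mpr hk2
    field_simp
    ring
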